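/- (Basic functions on a submersion; used in the proof of Proposition 3.15.) Let P and M be smooth manifolds without boundary modelled on finite-dimensional real vector spaces, and let φ : P → M be a smooth (C^∞) surjective submersion, i.e. for every p ∈ P the differential mfderiv φ at p is a surjective linear map T_pP → T_{φ(p)}M. Assume that each fiber φ⁻¹{m}, m ∈ M, is connected. If f : P → ℝ is a smooth function such that for every p ∈ P the differential of f at p vanishes on the kernel of mfderiv φ at p (i.e. df(u) = 0 for all vertical tangent vectors u), then f is basic: there exists a smooth function g : M → ℝ with f = g ∘ φ. -/

import Mathlib

open Manifold

open Set Topology Filter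

section KeyLocal

variable
    {EP : Type*} [NormedAddCommGroup EP] [NormedSpace ℝ EP] [FiniteDimensional ℝ EP]
    {EM : Type*} [NormedAddCommGroup EM] [NormedSpace ℝ EM] [FiniteDimensional ℝ EM]
    {P : Type*} [TopologicalSpace P] [ChartedSpace EP P]
    [IsManifold 𝓘(ℝ, EP) (⊤ : ℕ∞) P]
    {M : Type*} [TopologicalSpace M] [ChartedSpace EM M]
    [IsManifold 𝓘(ℝ, EM) (⊤ : ℕ∞) M]

theorem key_local (φ : P → M) (hφ : ContMDiff 𝓘(ℝ, EP) 𝓘(ℝ, EM) (⊤ : ℕ∞) φ)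
    (hsub : ∀ p : P, Function.Surjective (mfderiv 𝓘(ℝ, EP) 𝓘(ℝ, EM) φ p))
    (f : P → ℝ) (hf : ContMDiff 𝓘(ℝ, EP) 𝓘(ℝ, ℝ) (⊤ : ℕ∞) f)
    (hdf : ∀ (p : P) (u : TangentSpace 𝓘(ℝ, EP) p),
      mfderiv 𝓘(ℝ, EP) 𝓘(ℝ, EM) φ p u = 0 →
        mfderiv 𝓘(ℝ, EP) 𝓘(ℝ, ℝ) f p u = 0)
    (p : P) :
    (∃ s : M → P, s (φ p) = p ∧ ContMDiffAt 𝓘(ℝ, EM) 𝓘(ℝ, EP) (⊤ : ℕ∞) s (φ p) ∧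
      ∀ᶠ m in 𝓝 (φ p), φ (s m) = m) ∧
    (∀ᶠ q in 𝓝 p, φ q = φ p → f q = f p) := by
  set e := extChartAt 𝓘(ℝ, EP) p with he
  set e' := extChartAt 𝓘(ℝ, EM) (φ p) with he'
  set x0 := e p with hx0
  set ψ : EP → EM := ↑e' ∘ φ ∘ ↑e.symm with hψdef
  have hle : (1 : WithTop ℕ∞) ≤ ((⊤ : ℕ∞) : WithTop ℕ∞) := by exact_mod_cast le_top
  have hne : ((⊤ : ℕ∞) : WithTop ℕ∞) ≠ 0 := by simp
  have hsymm0 : e.symm x0 = p := by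
    rw [hx0]
    exact e.left_inv (mem_extChartAt_source (I := 𝓘(ℝ, EP)) p)
  have hS : {x : EP | x ∈ e.target ∧ φ (e.symm x) ∈ e'.source} ∈ 𝓝 x0 := by
    have h1 : e.target ∈ 𝓝 x0 := extChartAt_target_mem_nhds (I := 𝓘(ℝ, EP)) p
    have hc : ContinuousAt (fun x => φ (e.symm x)) x0 := by
      exact (hφ.continuous.continuousAt).comp (continuousAt_extChartAt_symm (I := 𝓘(ℝ, EP)) p)
    have h2 : (fun x => φ (e.symm x)) ⁻¹' e'.source ∈ 𝓝 x0 := by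
      apply hc.preimage_mem_nhds
      rw [hsymm0]
      exact extChartAt_source_mem_nhds (I := 𝓘(ℝ, EM)) (φ p)
    exact inter_mem h1 h2
  -- Claim C : vertical vanishing in charts
  have hC : ∀ᶠ x in 𝓝 x0,
      DifferentiableAt ℝ (f ∘ ↑e.symm) x ∧
      ∀ v : EP, fderiv ℝ ψ x v = 0 → fderiv ℝ (f ∘ ↑e.symm) x v = 0 := by
    filter_upwards [hS] with x hx
    obtain ⟨hxt, hxs⟩ := hx
    set q := e.symm x with hq
    have hqsrc : q ∈ e.source := e.map_target hxt
    have m1 : MDifferentiableAt 𝓘(ℝ, EP) 𝓘(ℝ, EP) (↑e.symm) x := by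
      apply ((contMDiffOn_extChartAt_symm p).contMDiffAt
        ((isOpen_extChartAt_target (I := 𝓘(ℝ, EP)) p).mem_nhds hxt)).mdifferentiableAt hne
    have m2 : MDifferentiableAt 𝓘(ℝ, EP) 𝓘(ℝ, EM) φ q := (hφ q).mdifferentiableAt hne
    have m3 : MDifferentiableAt 𝓘(ℝ, EM) 𝓘(ℝ, EM) (↑e') (φ q) := by
      apply (contMDiffAt_extChartAt' (x := φ p) ?_).mdifferentiableAt hne
      rwa [← extChartAt_source (I := 𝓘(ℝ, EM)) (x := φ p)]
    have m4 : MDifferentiableAt 𝓘(ℝ, EP) 𝓘(ℝ, ℝ) f q := (hf q).mdifferentiableAt hne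
    have hcomp1 : mfderiv 𝓘(ℝ, EP) 𝓘(ℝ, EM) (φ ∘ ↑e.symm) x =
        (mfderiv 𝓘(ℝ, EP) 𝓘(ℝ, EM) φ q).comp (mfderiv 𝓘(ℝ, EP) 𝓘(ℝ, EP) (↑e.symm) x) :=
      mfderiv_comp x m2 m1
    have heq1 : fderiv ℝ ψ x = (mfderiv 𝓘(ℝ, EM) 𝓘(ℝ, EM) (↑e') (φ q)).comp
        ((mfderiv 𝓘(ℝ, EP) 𝓘(ℝ, EM) φ q).comp (mfderiv 𝓘(ℝ, EP) 𝓘(ℝ, EP) (↑e.symm) x)) := by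
      rw [← mfderiv_eq_fderiv]
      exact (mfderiv_comp x (by exact m3) (m2.comp x m1)).trans
        (congrArg (mfderiv 𝓘(ℝ, EM) 𝓘(ℝ, EM) (↑e') (φ q)).comp hcomp1)
    have heq2 : fderiv ℝ (f ∘ ↑e.symm) x = (mfderiv 𝓘(ℝ, EP) 𝓘(ℝ, ℝ) f q).comp
        (mfderiv 𝓘(ℝ, EP) 𝓘(ℝ, EP) (↑e.symm) x) := by
      rw [← mfderiv_eq_fderiv]
      exact mfderiv_comp x m4 m1
    have hinj : Function.Injective (mfderiv 𝓘(ℝ, EM) 𝓘(ℝ, EM) (↑e') (φ q)) := by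
      have hsrc : e'.source ∈ 𝓝 (φ q) := by
        exact (isOpen_extChartAt_source (I := 𝓘(ℝ, EM)) (φ p)).mem_nhds hxs
      have hev : (↑e'.symm ∘ ↑e' : M → M) =ᶠ[𝓝 (φ q)] id := by
        filter_upwards [hsrc] with m hm
        exact e'.left_inv hm
      have m5 : MDifferentiableAt 𝓘(ℝ, EM) 𝓘(ℝ, EM) (↑e'.symm) (e' (φ q)) := by
        apply ((contMDiffOn_extChartAt_symm (φ p)).contMDiffAt
          ((isOpen_extChartAt_target (I := 𝓘(ℝ, EM)) (φ p)).mem_nhds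
            (e'.map_source hxs))).mdifferentiableAt hne
      have hcomp : (mfderiv 𝓘(ℝ, EM) 𝓘(ℝ, EM) (↑e'.symm) (e' (φ q))).comp
          (mfderiv 𝓘(ℝ, EM) 𝓘(ℝ, EM) (↑e') (φ q)) = ContinuousLinearMap.id ℝ _ := by
        rw [← mfderiv_comp (φ q) m5 m3]
        rw [hev.mfderiv_eq, mfderiv_id]
      intro u v huv
      have hw : ∀ w, (mfderiv 𝓘(ℝ, EM) 𝓘(ℝ, EM) (↑e'.symm) (e' (φ q)))
          ((mfderiv 𝓘(ℝ, EM) 𝓘(ℝ, EM) (↑e') (φ q)) w) = w := fun w => by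
        conv_rhs => rw [← ContinuousLinearMap.id_apply (R₁ := ℝ) w, ← hcomp]
        rfl
      rw [← hw u, ← hw v, huv]
    have hfd : DifferentiableAt ℝ (f ∘ ↑e.symm) x := by
      have : MDifferentiableAt 𝓘(ℝ, EP) 𝓘(ℝ, ℝ) (f ∘ ↑e.symm) x := m4.comp x m1
      rwa [mdifferentiableAt_iff_differentiableAt] at this
    refine ⟨hfd, fun v hv => ?_⟩
    rw [heq1] at hv
    have h0 : mfderiv 𝓘(ℝ, EP) 𝓘(ℝ, EM) φ q ((mfderiv 𝓘(ℝ, EP) 𝓘(ℝ, EP) (↑e.symm) x) v) = 0 := by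
      apply hinj
      rw [map_zero]
      exact hv
    have := hdf q _ h0
    rw [heq2]
    exact this
  -- smoothness of ψ at x0
  have hψ : ContDiffAt ℝ ((⊤ : ℕ∞) : WithTop ℕ∞) ψ x0 := by
    have h1 := (contMDiffAt_iff.1 (hφ p)).2
    rw [ModelWithCorners.range_eq_univ, contDiffWithinAt_univ] at h1
    exact h1
  set A : EP →L[ℝ] EM := fderiv ℝ ψ x0 with hA
  have hAeq : mfderiv 𝓘(ℝ, EP) 𝓘(ℝ, EM) φ p = A := by
    rw [((hφ p).mdifferentiableAt hne).mfderiv, ModelWithCorners.range_eq_univ,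
      fderivWithin_univ]
    rfl
  have hAsurj : Function.Surjective A := by
    have := hsub p
    rwa [hAeq] at this
  set K := LinearMap.ker (A : EP →ₗ[ℝ] EM) with hK
  obtain ⟨π, hπ⟩ := Submodule.ClosedComplemented.of_finiteDimensional K
  set D : EP →L[ℝ] EM × K := A.prod π with hD
  have hbij : Function.Bijective D := by
    constructor
    · refine (injective_iff_map_eq_zero D).2 fun v hv => ?_
      rw [hD] at hv
      have h1 : A v = 0 := congrArg Prod.fst hv
      have hvK : v ∈ K := LinearMap.mem_ker.2 h1
      have h2 : π v = 0 := congrArg Prod.snd hv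
      have h3 : π v = ⟨v, hvK⟩ := hπ ⟨v, hvK⟩
      have : (⟨v, hvK⟩ : K) = 0 := h3 ▸ h2
      simpa [Subtype.ext_iff] using this
    · rintro ⟨w, k⟩
      obtain ⟨v1, hv1⟩ := hAsurj w
      refine ⟨v1 - ↑(π v1) + ↑k, ?_⟩
      have h1 : A ↑(π v1) = 0 := LinearMap.mem_ker.1 (π v1).2
      have h2 : A ↑k = 0 := LinearMap.mem_ker.1 k.2
      have h3 : π ↑(π v1) = π v1 := hπ _
      have h4 : π ↑k = k := hπ _
      simp [hD, Prod.ext_iff, map_add, map_sub, h1, h2, h3, h4, hv1]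
  set Dequiv : EP ≃L[ℝ] EM × K :=
    (LinearEquiv.ofBijective (D : EP →ₗ[ℝ] EM × K) hbij).toContinuousLinearEquiv with hDe
  have hDeq : (Dequiv : EP →L[ℝ] EM × K) = D := by
    ext v <;> rfl
  set Φ : EP → EM × K := fun x => (ψ x, π (x - x0)) with hΦdef
  have hΦsmooth : ContDiffAt ℝ ((⊤ : ℕ∞) : WithTop ℕ∞) Φ x0 := by
    apply hψ.prodMk
    exact (π.contDiff.contDiffAt).comp x0 (contDiffAt_id.sub contDiffAt_const)
  have hΦderiv : HasFDerivAt Φ (Dequiv : EP →L[ℝ] EM × K) x0 := by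
    rw [hDeq]
    apply HasFDerivAt.prodMk
    · exact (hψ.differentiableAt hne).hasFDerivAt
    · simpa [Function.comp_def, map_sub] using
        π.hasFDerivAt.comp x0 ((hasFDerivAt_id x0).sub_const x0)
  have hs : HasStrictFDerivAt Φ (Dequiv : EP →L[ℝ] EM × K) x0 :=
    hΦsmooth.hasStrictFDerivAt' hΦderiv hne
  set inv : EM × K → EP := hs.localInverse Φ Dequiv x0 with hinvdef
  have hinv0 : inv (Φ x0) = x0 := hs.localInverse_apply_image
  have hinvsmooth : ContDiffAt ℝ ((⊤ : ℕ∞) : WithTop ℕ∞) inv (Φ x0) :=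
    hΦsmooth.to_localInverse hΦderiv hne
  have hright : ∀ᶠ y in 𝓝 (Φ x0), Φ (inv y) = y := hs.eventually_right_inverse
  have hleft : ∀ᶠ x in 𝓝 x0, inv (Φ x) = x := hs.eventually_left_inverse
  have hinvcont : ContinuousAt inv (Φ x0) := hs.localInverse_continuousAt
  set w0 := e' (φ p) with hw0
  have hψx0 : ψ x0 = w0 := by rw [hψdef]; simp [hsymm0, hw0]
  have hΦx0 : Φ x0 = (w0, 0) := by
    rw [hΦdef]
    simp [hψx0]
  -- tendsto facts
  have hkt : Tendsto (fun k : K => ((w0, k) : EM × K)) (𝓝 0) (𝓝 (Φ x0)) := by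
    rw [hΦx0]
    exact (continuous_const.prodMk continuous_id).continuousAt
  have c0t : Tendsto (fun k : K => inv (w0, k)) (𝓝 0) (𝓝 x0) := by
    have := (hinvcont.tendsto).comp hkt
    rwa [hinv0] at this
  -- differentiability of inv and ψ near the base points
  have hone : (1 : WithTop ℕ∞) ≠ ((⊤ : ℕ∞) : WithTop ℕ∞) := by
    exact_mod_cast (by decide : (1 : ℕ∞) ≠ ⊤)
  have hinv1ev : ∀ᶠ y in 𝓝 (Φ x0), ContDiffAt ℝ 1 inv y :=
    (hinvsmooth.of_le hle).eventually hone
  have hψ1ev : ∀ᶠ x in 𝓝 x0, ContDiffAt ℝ 1 ψ x := by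
    have : ∀ᶠ x in 𝓝 x0, ContMDiffAt 𝓘(ℝ, EP) 𝓘(ℝ, EM) (⊤ : ℕ∞) ψ x := by
      have hψall : ∀ᶠ x in 𝓝 x0, ContMDiffAt 𝓘(ℝ, EP) 𝓘(ℝ, EM) (⊤ : ℕ∞) ψ x := by
        filter_upwards [hS] with x hx
        have m1 : ContMDiffAt 𝓘(ℝ, EP) 𝓘(ℝ, EP) (⊤ : ℕ∞) (↑e.symm) x :=
          (contMDiffOn_extChartAt_symm p).contMDiffAt
            ((isOpen_extChartAt_target (I := 𝓘(ℝ, EP)) p).mem_nhds hx.1)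
        have m2 : ContMDiffAt 𝓘(ℝ, EP) 𝓘(ℝ, EM) (⊤ : ℕ∞) φ (e.symm x) := hφ _
        have m3 : ContMDiffAt 𝓘(ℝ, EM) 𝓘(ℝ, EM) (⊤ : ℕ∞) (↑e') (φ (e.symm x)) := by
          apply contMDiffAt_extChartAt' (x := φ p)
          rw [← extChartAt_source (I := 𝓘(ℝ, EM)) (x := φ p)]
          exact hx.2
        exact (m3.comp x (m2.comp x m1) : _)
      exact hψall
    filter_upwards [this] with x hx
    have := contMDiffAt_iff_contDiffAt.1 hx
    exact this.of_le hle
  -- the master eventual statement on K near 0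
  have hE : ∀ᶠ k in 𝓝 (0 : K),
      HasFDerivAt (fun k' : K => f (e.symm (inv (w0, k')))) (0 : K →L[ℝ] ℝ) k := by
    have t1 : ∀ᶠ k in 𝓝 (0 : K), Φ (inv (w0, k)) = (w0, k) := hkt.eventually hright
    have t2 := c0t.eventually hC
    have t3 : ∀ᶠ k in 𝓝 (0 : K), DifferentiableAt ℝ inv (w0, k) :=
      hkt.eventually (hinv1ev.mono fun y hy => hy.differentiableAt one_ne_zero)
    have t4 : ∀ᶠ k in 𝓝 (0 : K), DifferentiableAt ℝ ψ (inv (w0, k)) :=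
      c0t.eventually (hψ1ev.mono fun x hx => hx.differentiableAt one_ne_zero)
    have t5 : ∀ᶠ k in 𝓝 (0 : K),
        (fun y : EM × K => ψ (inv y)) =ᶠ[𝓝 ((w0, k) : EM × K)] Prod.fst := by
      have t5' : ∀ᶠ y in 𝓝 (Φ x0), (fun y' : EM × K => ψ (inv y')) =ᶠ[𝓝 y] Prod.fst := by
        filter_upwards [hright.eventually_nhds] with y hy
        filter_upwards [hy] with y' hy'
        exact congrArg Prod.fst hy'
      exact hkt.eventually (p := fun y => (fun y' : EM × K => ψ (inv y')) =ᶠ[𝓝 y] Prod.fst) t5'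
    filter_upwards [t1, t2, t3, t4, t5] with k h1 h2 h3 h4 h5
    have d1 : HasFDerivAt (fun k' : K => ((w0, k') : EM × K))
        (ContinuousLinearMap.inr ℝ EM K) k := hasFDerivAt_prodMk_right w0 k
    have d2 : HasFDerivAt inv (fderiv ℝ inv (w0, k)) (w0, k) := h3.hasFDerivAt
    have d3 : HasFDerivAt (f ∘ ↑e.symm) (fderiv ℝ (f ∘ ↑e.symm) (inv (w0, k)))
        (inv (w0, k)) := h2.1.hasFDerivAt
    have dh := d3.comp k (d2.comp k d1)
    have hzero : (fderiv ℝ (f ∘ ↑e.symm) (inv (w0, k))).comp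
        ((fderiv ℝ inv (w0, k)).comp (ContinuousLinearMap.inr ℝ EM K)) = 0 := by
      ext k'
      simp only [ContinuousLinearMap.comp_apply, ContinuousLinearMap.zero_apply]
      apply h2.2
      have hchain : fderiv ℝ (fun y : EM × K => ψ (inv y)) (w0, k) =
          (fderiv ℝ ψ (inv (w0, k))).comp (fderiv ℝ inv (w0, k)) := fderiv_comp (w0, k) h4 h3
      have hfst : fderiv ℝ (fun y : EM × K => ψ (inv y)) (w0, k) =
          ContinuousLinearMap.fst ℝ EM K := by
        rw [h5.fderiv_eq]
        exact fderiv_fst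
      have : (fderiv ℝ ψ (inv (w0, k))).comp (fderiv ℝ inv (w0, k)) =
          ContinuousLinearMap.fst ℝ EM K := hchain ▸ hfst
      calc fderiv ℝ ψ (inv (w0, k)) ((fderiv ℝ inv (w0, k)) ((ContinuousLinearMap.inr ℝ EM K) k'))
          = ((fderiv ℝ ψ (inv (w0, k))).comp (fderiv ℝ inv (w0, k)))
            ((0 : EM), k') := rfl
        _ = (ContinuousLinearMap.fst ℝ EM K) ((0 : EM), k') := by rw [this]
        _ = 0 := rfl
    rw [hzero] at dh
    exact dh
  obtain ⟨ε, hε, hball⟩ := Metric.eventually_nhds_iff_ball.1 hE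
  set h : K → ℝ := fun k => f (e.symm (inv (w0, k))) with hhdef
  have hconsth : ∀ k ∈ Metric.ball (0 : K) ε, h k = h 0 := by
    intro k hk
    refine (convex_ball (0 : K) ε).is_const_of_fderivWithin_eq_zero
      (fun k' hk' => (hball k' hk').differentiableAt.differentiableWithinAt)
      (fun k' hk' => ?_) hk (Metric.mem_ball_self hε)
    rw [fderivWithin_of_isOpen Metric.isOpen_ball hk']
    exact (hball k' hk').fderiv
  have hval0 : h 0 = f p := by
    rw [hhdef]
    simp only
    rw [show ((w0, (0 : K)) : EM × K) = Φ x0 from hΦx0.symm, hinv0, hsymm0]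
  constructor
  · -- the local section
    refine ⟨fun m => e.symm (inv (e' m, 0)), ?_, ?_, ?_⟩
    · show e.symm (inv (e' (φ p), 0)) = p
      rw [show ((e' (φ p), (0 : K)) : EM × K) = Φ x0 from hΦx0.symm, hinv0, hsymm0]
    · -- smoothness
      have hx0inv : inv (w0, 0) = x0 := by rw [← hΦx0, hinv0]
      have hj : ContDiffAt ℝ ((⊤ : ℕ∞) : WithTop ℕ∞) (fun w : EM => inv (w, 0)) w0 := by
        have hinv' := hinvsmooth
        rw [hΦx0] at hinv'
        exact hinv'.comp w0 (contDiffAt_id.prodMk contDiffAt_const)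
      have c1 : ContMDiffAt 𝓘(ℝ, EM) 𝓘(ℝ, EM) (⊤ : ℕ∞) (↑e') (φ p) := contMDiffAt_extChartAt
      have c2 : ContMDiffAt 𝓘(ℝ, EM) 𝓘(ℝ, EP) (⊤ : ℕ∞) (fun w : EM => inv (w, 0)) w0 :=
        contMDiffAt_iff_contDiffAt.2 hj
      have c3 : ContMDiffAt 𝓘(ℝ, EP) 𝓘(ℝ, EP) (⊤ : ℕ∞) (↑e.symm) (inv (w0, 0)) := by
        rw [hx0inv]
        exact (contMDiffOn_extChartAt_symm p).contMDiffAt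
          ((isOpen_extChartAt_target (I := 𝓘(ℝ, EP)) p).mem_nhds
            (e.map_source (mem_extChartAt_source (I := 𝓘(ℝ, EP)) p)))
      exact (c3.comp (φ p) (c2.comp (φ p) c1) : _)
    · -- eventual right inverse
      have hkt' : Tendsto (fun m => ((e' m, 0) : EM × K)) (𝓝 (φ p)) (𝓝 (Φ x0)) := by
        rw [hΦx0]
        exact ((continuousAt_extChartAt (I := 𝓘(ℝ, EM)) (φ p)).prodMk continuousAt_const)
      have htend : Tendsto (fun m => inv (e' m, 0)) (𝓝 (φ p)) (𝓝 x0) := by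
        have := hinvcont.tendsto.comp hkt'
        rwa [hinv0] at this
      have G1 : ∀ᶠ m in 𝓝 (φ p), m ∈ e'.source :=
        extChartAt_source_mem_nhds (I := 𝓘(ℝ, EM)) (φ p)
      have G2 : ∀ᶠ m in 𝓝 (φ p), Φ (inv (e' m, 0)) = (e' m, 0) :=
        hkt'.eventually (p := fun y => Φ (inv y) = y) hright
      have G3 : ∀ᶠ m in 𝓝 (φ p),
          inv (e' m, 0) ∈ {x : EP | x ∈ e.target ∧ φ (e.symm x) ∈ e'.source} :=
        htend.eventually (p := fun x => x ∈ {x : EP | x ∈ e.target ∧ φ (e.symm x) ∈ e'.source})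
          hS
      filter_upwards [G1, G2, G3] with m h1 h2 h3
      have hfirst : ψ (inv (e' m, 0)) = e' m := congrArg Prod.fst h2
      exact e'.injOn h3.2 h1 hfirst
  · -- local constancy on the fiber
    have F1 : ∀ᶠ q in 𝓝 p, q ∈ e.source := extChartAt_source_mem_nhds (I := 𝓘(ℝ, EP)) p
    have F2 : ∀ᶠ q in 𝓝 p, inv (Φ (e q)) = e q := by
      have hct : Tendsto (fun q => e q) (𝓝 p) (𝓝 x0) := continuousAt_extChartAt (I := 𝓘(ℝ, EP)) p
      exact hct.eventually (p := fun x => inv (Φ x) = x) hleft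
    have F3 : ∀ᶠ q in 𝓝 p, π (e q - x0) ∈ Metric.ball (0 : K) ε := by
      have hct : ContinuousAt (fun q => π (e q - x0)) p :=
        π.continuous.continuousAt.comp
          (((continuousAt_extChartAt (I := 𝓘(ℝ, EP)) p).sub continuousAt_const))
      have : π (e p - x0) ∈ Metric.ball (0 : K) ε := by
        simp [← hx0, Metric.mem_ball_self hε]
      exact hct.eventually_mem (Metric.isOpen_ball.mem_nhds this)
    filter_upwards [F1, F2, F3] with q h1 h2 h3 hq
    have hsymmq : e.symm (e q) = q := e.left_inv h1
    have hψq : ψ (e q) = w0 := by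
      show e' (φ (e.symm (e q))) = w0
      rw [hsymmq, hq, hw0]
    have hΦq : Φ (e q) = (w0, π (e q - x0)) := by
      rw [hΦdef]
      simp [hψq]
    calc f q = f (e.symm (e q)) := by rw [hsymmq]
      _ = h (π (e q - x0)) := by rw [hhdef]; simp only; rw [← hΦq, h2]
      _ = h 0 := hconsth _ h3
      _ = f p := hval0

end KeyLocal

/-- Basic functions on a surjective submersion with connected fibers: if `φ : P → M` is a
smooth surjective submersion between smooth manifolds with connected fibers, and `f : P → ℝ`
is a smooth function whose differential vanishes on the kernel of the differential of `φ`
(the vertical tangent vectors), then `f` is basic: `f = g ∘ φ` for a smooth `g : M → ℝ`. -/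
theorem basic_function_of_surjective_submersion_connected_fibers
    {EP : Type*} [NormedAddCommGroup EP] [NormedSpace ℝ EP] [FiniteDimensional ℝ EP]
    {EM : Type*} [NormedAddCommGroup EM] [NormedSpace ℝ EM] [FiniteDimensional ℝ EM]
    {P : Type*} [TopologicalSpace P] [ChartedSpace EP P]
    [IsManifold 𝓘(ℝ, EP) (⊤ : ℕ∞) P]
    {M : Type*} [TopologicalSpace M] [ChartedSpace EM M]
    [IsManifold 𝓘(ℝ, EM) (⊤ : ℕ∞) M]
    (φ : P → M) (hφ : ContMDiff 𝓘(ℝ, EP) 𝓘(ℝ, EM) (⊤ : ℕ∞) φ)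
    (hsurj : Function.Surjective φ)
    (hsub : ∀ p : P, Function.Surjective (mfderiv 𝓘(ℝ, EP) 𝓘(ℝ, EM) φ p))
    (hfib : ∀ m : M, IsConnected (φ ⁻¹' {m}))
    (f : P → ℝ) (hf : ContMDiff 𝓘(ℝ, EP) 𝓘(ℝ, ℝ) (⊤ : ℕ∞) f)
    (hdf : ∀ (p : P) (u : TangentSpace 𝓘(ℝ, EP) p),
      mfderiv 𝓘(ℝ, EP) 𝓘(ℝ, EM) φ p u = 0 →
        mfderiv 𝓘(ℝ, EP) 𝓘(ℝ, ℝ) f p u = 0) :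
    ∃ g : M → ℝ, ContMDiff 𝓘(ℝ, EM) 𝓘(ℝ, ℝ) (⊤ : ℕ∞) g ∧ f = g ∘ φ := by
  have hconst : ∀ a b : P, φ a = φ b → f a = f b := by
    intro a b hab
    have hcs : ConnectedSpace (φ ⁻¹' {φ b}) := Subtype.connectedSpace (hfib (φ b))
    have hlc : IsLocallyConstant (fun x : φ ⁻¹' {φ b} => f x.val) := by
      rw [IsLocallyConstant.iff_exists_open]
      rintro ⟨x, hx⟩
      obtain ⟨U, hU, hUopen, hxU⟩ :=
        eventually_nhds_iff.1 ((key_local φ hφ hsub f hf hdf x).2)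
      refine ⟨Subtype.val ⁻¹' U, hUopen.preimage continuous_subtype_val, hxU, ?_⟩
      rintro ⟨y, hy⟩ hyU
      exact hU y hyU (by simp only [Set.mem_preimage, Set.mem_singleton_iff] at hx hy; rw [hx, hy])
    exact hlc.apply_eq_of_preconnectedSpace ⟨a, hab⟩ ⟨b, rfl⟩
  choose σ hσ using hsurj
  refine ⟨fun m => f (σ m), ?_, ?_⟩
  · intro m
    obtain ⟨⟨s, hs0, hssmooth, hsev⟩, -⟩ := key_local φ hφ hsub f hf hdf (σ m)
    rw [hσ m] at hssmooth hsev
    have hev : (fun m' => f (σ m')) =ᶠ[𝓝 m] (f ∘ s) := by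
      filter_upwards [hsev] with m' hm'
      exact hconst _ _ ((hσ m').trans hm'.symm)
    exact (((hf _).comp m hssmooth)).congr_of_eventuallyEq hev
  · funext q
    exact (hconst (σ (φ q)) q (hσ (φ q))).symm
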